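/- Suppose the sequences κ, κ′, d : ℕ → (0,∞) satisfy the Antonets–Zhislin–Shereshevskij conditions. Let Z be a partition of {1,…,N} with 2 ≤ |Z|, and let C ⊆ {1,…,N} be a nonempty cluster which is not contained in any single cluster of Z. Then for every partition Z̃ of {1,…,N} which has C as one of its clusters and satisfies |Z̃| ≥ |Z|, one has K(Z̃, κ(|Z̃|)) ∩ M(Z,κ′,κ) = ∅. -/

import Mathlib

/-! STATEMENT 15: if the cluster `C` is split by `Z` then any cone of a partition containing `C` as a cluster, of order at least `|Z|`, is disjoint from `M(Z,κ′,κ)`. -/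

open MeasureTheory Finset

open scoped RealInnerProductSpace

noncomputable section

/-- The one-particle space `ℝⁿ`. -/
abbrev Pt (n : ℕ) := EuclideanSpace ℝ (Fin n)

/-- The configuration space `X = (ℝⁿ)^N`. -/
abbrev Conf (N n : ℕ) := Fin N → Pt n

/-- The mass inner product `⟨x,y⟩_m = ∑ i mᵢ ⟨xᵢ, yᵢ⟩`. -/
def minner {N n : ℕ} (mass : Fin N → ℝ) (x y : Conf N n) : ℝ :=
  ∑ i, mass i * ⟪x i, y i⟫

/-- The mass norm `|x|_m`. -/
def mnorm {N n : ℕ} (mass : Fin N → ℝ) (x : Conf N n) : ℝ :=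
  Real.sqrt (minner mass x x)

/-- The space `X₀` of relative positions: `∑ i mᵢ xᵢ = 0`. -/
def X0 {N n : ℕ} (mass : Fin N → ℝ) : Set (Conf N n) :=
  {x | ∑ i, mass i • x i = 0}

/-- Total mass `M[C]` of a cluster `C`. -/
def cmass {N : ℕ} (mass : Fin N → ℝ) (C : Finset (Fin N)) : ℝ := ∑ i ∈ C, mass i

/-- Center of mass `x_c[C]` of the cluster `C`. -/
def com {N n : ℕ} (mass : Fin N → ℝ) (C : Finset (Fin N)) (x : Conf N n) : Pt n :=
  (cmass mass C)⁻¹ • ∑ i ∈ C, mass i • x i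

/-- The `⟨·,·⟩_m`-orthogonal projection `P₀[C]` of `X₀` onto `X₀[C]`:
explicitly, `(P₀[C]x)ᵢ = xᵢ − x_c[C]` for `i ∈ C` and `0` otherwise. -/
def P0C {N n : ℕ} (mass : Fin N → ℝ) (C : Finset (Fin N)) (x : Conf N n) : Conf N n :=
  fun i => if i ∈ C then x i - com mass C x else 0

/-- A partition (cluster decomposition) of the `N`-particle system. -/
abbrev Partn (N : ℕ) := Finpartition (Finset.univ : Finset (Fin N))

/-- The `⟨·,·⟩_m`-orthogonal projection `P_c(Z)` of `X₀` onto `X_c(Z) = X₀ ⊖ X₀(Z)`: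
explicitly, `(P_c(Z)x)ᵢ = x_c[C]` where `C` is the cluster of `Z` containing `i`. -/
def PcZ {N n : ℕ} (mass : Fin N → ℝ) (Z : Partn N) (x : Conf N n) : Conf N n :=
  fun i => ∑ C ∈ Z.parts, if i ∈ C then com mass C x else 0

/-- The `⟨·,·⟩_m`-orthogonal projection `P₀(Z)` of `X₀` onto `X₀(Z) = ⊕_{C ∈ Z} X₀[C]`. -/
def P0Z {N n : ℕ} (mass : Fin N → ℝ) (Z : Partn N) (x : Conf N n) : Conf N n :=
  x - PcZ mass Z x

/-- The cone `K(Z,κ) = {x ∈ X₀ : |P₀(Z)x|_m ≤ κ|P_c(Z)x|_m}` for `|Z| > 1`;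
for the trivial partition (`|Z| = 1`), `K(Z,κ) = {x ∈ X₀ : |x|_m ≤ κ}`. -/
def cone {N n : ℕ} (mass : Fin N → ℝ) (Z : Partn N) (κ : ℝ) : Set (Conf N n) :=
  if 1 < Z.parts.card then
    {x ∈ X0 mass | mnorm mass (P0Z mass Z x) ≤ κ * mnorm mass (PcZ mass Z x)}
  else
    {x ∈ X0 mass | mnorm mass x ≤ κ}

/-- The total mass `M = ∑ i mᵢ`. -/
def totalMass {N : ℕ} (mass : Fin N → ℝ) : ℝ := ∑ i, mass i

/-- The minimal mass `m = minᵢ mᵢ`. -/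
def minMass {N : ℕ} (mass : Fin N → ℝ) : ℝ := ⨅ i, mass i

/-- The Antonets–Zhislin–Shereshevskij conditions on the sequences `κ, κ′, d : ℕ → (0,∞)`:
for every `l ≥ 1`, `0 < κ′(l) < κ(l)` and
`(m³/M³)·(κ′(l)² − κ(l+1)²)/(1 + κ′(l)²) − κ(l+1)² > d(l+1)² > κ(l+1)²(1 + κ(l+1)²)`. -/
def AZS {N : ℕ} (mass : Fin N → ℝ) (κ κ' dd : ℕ → ℝ) : Prop :=
  (∀ l, 0 < κ l ∧ 0 < κ' l ∧ 0 < dd l) ∧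
  ∀ l, 1 ≤ l →
    κ' l < κ l ∧
    (minMass mass ^ 3 / totalMass mass ^ 3) *
        ((κ' l ^ 2 - κ (l + 1) ^ 2) / (1 + κ' l ^ 2)) - κ (l + 1) ^ 2
      > dd (l + 1) ^ 2 ∧
    dd (l + 1) ^ 2 > κ (l + 1) ^ 2 * (1 + κ (l + 1) ^ 2)

/-- The region `M(Z,κ′,κ) = K(Z,κ(|Z|)) \ ⋃_{|Z′| < |Z|} K(Z′,κ′(|Z′|))`. -/
def Mreg {N n : ℕ} (mass : Fin N → ℝ) (κ' κ : ℕ → ℝ) (Z : Partn N) : Set (Conf N n) :=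
  cone mass Z (κ Z.parts.card) \
    ⋃ (Z' : Partn N) (_ : Z'.parts.card < Z.parts.card), cone mass Z' (κ' Z'.parts.card)

section lemmas
variable {N n : ℕ} {mass : Fin N → ℝ}

lemma minner_self_nonneg (hm : ∀ i, 0 < mass i) (x : Conf N n) : 0 ≤ minner mass x x :=
  Finset.sum_nonneg fun i _ => mul_nonneg (hm i).le real_inner_self_nonneg

lemma minner_self_eq (x : Conf N n) : minner mass x x = ∑ i, mass i * ‖x i‖ ^ 2 := by
  unfold minner; exact Finset.sum_congr rfl fun i _ => by rw [real_inner_self_eq_norm_sq]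

lemma minner_add_add (a b : Conf N n) :
    minner mass (a + b) (a + b)
      = minner mass a a + 2 * minner mass a b + minner mass b b := by
  unfold minner
  rw [Finset.mul_sum, ← Finset.sum_add_distrib, ← Finset.sum_add_distrib]
  refine Finset.sum_congr rfl fun i _ => ?_
  simp only [Pi.add_apply, real_inner_add_add_self, real_inner_comm (b i) (a i)]
  ring

lemma cmass_pos (hm : ∀ i, 0 < mass i) {C : Finset (Fin N)} (hC : C.Nonempty) :
    0 < cmass mass C :=
  Finset.sum_pos (fun i _ => hm i) hC

lemma sum_smul_com (hm : ∀ i, 0 < mass i) {C : Finset (Fin N)} (hC : C.Nonempty)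
    (x : Conf N n) : ∑ i ∈ C, mass i • x i = cmass mass C • com mass C x := by
  rw [com, smul_smul, mul_inv_cancel₀ (cmass_pos hm hC).ne', one_smul]

lemma PcZ_apply (Z : Partn N) (x : Conf N n) {E : Finset (Fin N)} (hE : E ∈ Z.parts)
    {i : Fin N} (hi : i ∈ E) : PcZ mass Z x i = com mass E x := by
  unfold PcZ
  rw [Finset.sum_eq_single_of_mem E hE]
  · rw [if_pos hi]
  · intro F hF hFE
    exact if_neg fun hiF => hFE (Z.eq_of_mem_parts hF hE hiF hi)

lemma P0Z_apply (Z : Partn N) (x : Conf N n) {E : Finset (Fin N)} (hE : E ∈ Z.parts)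
    {i : Fin N} (hi : i ∈ E) : P0Z mass Z x i = x i - com mass E x := by
  rw [P0Z, Pi.sub_apply, PcZ_apply Z x hE hi]

/-- orthogonality: `P0Z` is orthogonal to anything constant on the parts. -/
lemma minner_P0Z_eq_zero (hm : ∀ i, 0 < mass i) (Z : Partn N) (x y : Conf N n)
    (c : Finset (Fin N) → Pt n)
    (hy : ∀ E ∈ Z.parts, ∀ i ∈ E, y i = c E) :
    minner mass (P0Z mass Z x) y = 0 := by
  unfold minner
  rw [← Z.biUnion_parts, Finset.sum_biUnion Z.disjoint]
  refine Finset.sum_eq_zero fun E hE => ?_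
  simp only [id]
  have h1 : ∀ i ∈ E, mass i * ⟪P0Z mass Z x i, y i⟫ = ⟪mass i • (x i - com mass E x), c E⟫ := by
    intro i hi
    rw [P0Z_apply Z x hE hi, hy E hE i hi, real_inner_smul_left]
  rw [Finset.sum_congr rfl h1, ← sum_inner]
  have h2 : ∑ i ∈ E, mass i • (x i - com mass E x) = 0 := by
    have hEne : E.Nonempty := Z.nonempty_of_mem_parts hE
    simp_rw [smul_sub]
    rw [Finset.sum_sub_distrib, ← Finset.sum_smul, sum_smul_com hm hEne, ← cmass, sub_self]
  rw [h2, inner_zero_left]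

lemma pyth (hm : ∀ i, 0 < mass i) (Z : Partn N) (x : Conf N n) :
    minner mass x x = minner mass (P0Z mass Z x) (P0Z mass Z x)
      + minner mass (PcZ mass Z x) (PcZ mass Z x) := by
  have hx : x = P0Z mass Z x + PcZ mass Z x := by rw [P0Z]; abel
  have h0 : minner mass (P0Z mass Z x) (PcZ mass Z x) = 0 :=
    minner_P0Z_eq_zero hm Z x _ (fun E => com mass E x)
      (fun E hE i hi => PcZ_apply Z x hE hi)
  calc minner mass x x = minner mass (P0Z mass Z x + PcZ mass Z x)
        (P0Z mass Z x + PcZ mass Z x) := by rw [← hx]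
    _ = _ := by rw [minner_add_add, h0]; ring

end lemmas

section merge
variable {N : ℕ} (Z : Partn N) {Ca Cb : Finset (Fin N)}

/-- the partition obtained from `Z` by merging the two clusters `Ca` and `Cb`. -/
def mergePartn (ha : Ca ∈ Z.parts) (hb : Cb ∈ Z.parts) (hne : Ca ≠ Cb) : Partn N where
  parts := insert (Ca ∪ Cb) ((Z.parts.erase Ca).erase Cb)
  supIndep := by
    rw [Finset.supIndep_iff_pairwiseDisjoint]
    intro u hu v hv huv
    simp only [Finset.coe_insert, Set.mem_insert_iff, Finset.mem_coe, Finset.mem_erase] at hu hv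
    have hrest : ∀ w, w ≠ Cb ∧ w ≠ Ca ∧ w ∈ Z.parts → Disjoint (Ca ∪ Cb) w := by
      rintro w ⟨hwb, hwa, hw⟩
      rw [Finset.disjoint_union_left]
      exact ⟨Z.disjoint ha hw (Ne.symm hwa), Z.disjoint hb hw (Ne.symm hwb)⟩
    rcases hu with hu | hu <;> rcases hv with hv | hv
    · exact absurd (hu.trans hv.symm) huv
    · subst hu; exact hrest v hv
    · subst hv; exact (hrest u hu).symm
    · exact Z.disjoint hu.2.2 hv.2.2 huv
  sup_parts := by
    have h1 : Cb ∈ Z.parts.erase Ca := Finset.mem_erase.2 ⟨Ne.symm hne, hb⟩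
    have h2 := Z.sup_parts
    rw [← Finset.insert_erase ha, Finset.sup_insert, ← Finset.insert_erase h1,
      Finset.sup_insert] at h2
    rw [Finset.sup_insert]
    have h3 : id (Ca ∪ Cb) ⊔ ((Z.parts.erase Ca).erase Cb).sup id
        = id Ca ⊔ (id Cb ⊔ ((Z.parts.erase Ca).erase Cb).sup id) := by
      simp only [id, Finset.sup_eq_union]; ac_rfl
    rw [h3, h2]
  bot_notMem := by
    rw [Finset.mem_insert]
    rintro (h | h)
    · exact (Z.nonempty_of_mem_parts ha).ne_empty (by
        have : Ca ⊆ (⊥ : Finset (Fin N)) := h ▸ Finset.subset_union_left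
        simpa using Finset.subset_empty.1 this)
    · exact Z.bot_notMem (Finset.mem_of_mem_erase (Finset.mem_of_mem_erase h))

lemma mergePartn_not_mem (ha : Ca ∈ Z.parts) : Ca ∪ Cb ∉ (Z.parts.erase Ca).erase Cb := by
  intro h
  have h2 := Finset.mem_erase.1 h
  have h3 := Finset.mem_erase.1 h2.2
  have hd : Disjoint (Ca ∪ Cb) Ca := Z.disjoint h3.2 ha h3.1
  obtain ⟨i, hi⟩ := Z.nonempty_of_mem_parts ha
  exact Finset.disjoint_left.1 hd (Finset.mem_union_left _ hi) hi

lemma mergePartn_card (ha : Ca ∈ Z.parts) (hb : Cb ∈ Z.parts) (hne : Ca ≠ Cb) : (mergePartn Z ha hb hne).parts.card = Z.parts.card - 1 := by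
  have h1 : Cb ∈ Z.parts.erase Ca := Finset.mem_erase.2 ⟨Ne.symm hne, hb⟩
  have hp : 2 ≤ Z.parts.card := by
    have := Finset.card_erase_of_mem ha
    have h2 := Finset.card_pos.2 ⟨Cb, h1⟩
    omega
  rw [mergePartn, Finset.card_insert_of_notMem (mergePartn_not_mem Z ha),
    Finset.card_erase_of_mem h1, Finset.card_erase_of_mem ha]
  omega

end merge

section delta
variable {N n : ℕ} {mass : Fin N → ℝ} {Ca Cb : Finset (Fin N)}

lemma com_union (hm : ∀ i, 0 < mass i) (hab : Disjoint Ca Cb)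
    (hCa : Ca.Nonempty) (hCb : Cb.Nonempty) (x : Conf N n) :
    com mass (Ca ∪ Cb) x
      = (cmass mass Ca + cmass mass Cb)⁻¹
        • (cmass mass Ca • com mass Ca x + cmass mass Cb • com mass Cb x) := by
  rw [com, cmass, Finset.sum_union hab, Finset.sum_union hab,
    sum_smul_com hm hCa, sum_smul_com hm hCb]
  rfl

lemma com_sub_com_union (hm : ∀ i, 0 < mass i) (hab : Disjoint Ca Cb)
    (hCa : Ca.Nonempty) (hCb : Cb.Nonempty) (x : Conf N n) :
    com mass Ca x - com mass (Ca ∪ Cb) x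
      = ((cmass mass Ca + cmass mass Cb)⁻¹ * cmass mass Cb)
          • (com mass Ca x - com mass Cb x) := by
  set Ma := cmass mass Ca
  set Mb := cmass mass Cb
  set ca := com mass Ca x
  set cb := com mass Cb x
  have hMa := cmass_pos hm hCa
  have hMb := cmass_pos hm hCb
  have hS0 : Ma + Mb ≠ 0 := by positivity
  rw [com_union hm hab hCa hCb x]
  calc ca - (Ma + Mb)⁻¹ • (Ma • ca + Mb • cb)
      = (Ma + Mb)⁻¹ • ((Ma + Mb) • ca - (Ma • ca + Mb • cb)) := by
        rw [smul_sub, smul_smul, inv_mul_cancel₀ hS0, one_smul]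
    _ = (Ma + Mb)⁻¹ • (Mb • (ca - cb)) := by
        congr 1
        rw [add_smul, smul_sub]
        abel
    _ = ((Ma + Mb)⁻¹ * Mb) • (ca - cb) := by rw [smul_smul]

lemma norm_com_sub_com_union_le (hm : ∀ i, 0 < mass i) (hab : Disjoint Ca Cb)
    (hCa : Ca.Nonempty) (hCb : Cb.Nonempty) (x : Conf N n) :
    ‖com mass Ca x - com mass (Ca ∪ Cb) x‖ ≤ ‖com mass Ca x - com mass Cb x‖ := by
  rw [com_sub_com_union hm hab hCa hCb x, norm_smul]
  have hMa := cmass_pos hm hCa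
  have hMb := cmass_pos hm hCb
  have h1 : |(cmass mass Ca + cmass mass Cb)⁻¹ * cmass mass Cb| ≤ 1 := by
    rw [abs_of_nonneg (by positivity), inv_mul_le_one₀ (by positivity)]
    linarith
  calc _ ≤ 1 * ‖com mass Ca x - com mass Cb x‖ :=
        mul_le_mul_of_nonneg_right h1 (norm_nonneg _)
    _ = _ := one_mul _

end delta

section deltamain
variable {N n : ℕ} {mass : Fin N → ℝ} {Ca Cb : Finset (Fin N)}

open Classical in
lemma delta_apply (hm : ∀ i, 0 < mass i) (Z : Partn N)
    (ha : Ca ∈ Z.parts) (hb : Cb ∈ Z.parts) (hne : Ca ≠ Cb) (x : Conf N n)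
    {E : Finset (Fin N)} (hE : E ∈ Z.parts) {i : Fin N} (hi : i ∈ E) :
    (PcZ mass Z x - PcZ mass (mergePartn Z ha hb hne) x) i
      = com mass E x - com mass (if E = Ca ∨ E = Cb then Ca ∪ Cb else E) x := by
  have hD : Ca ∪ Cb ∈ (mergePartn Z ha hb hne).parts := Finset.mem_insert_self _ _
  rw [Pi.sub_apply, PcZ_apply Z x hE hi]
  by_cases hEa : E = Ca
  · rw [if_pos (Or.inl hEa), PcZ_apply _ x hD (Finset.mem_union_left _ (hEa ▸ hi))]
  by_cases hEb : E = Cb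
  · rw [if_pos (Or.inr hEb), PcZ_apply _ x hD (Finset.mem_union_right _ (hEb ▸ hi))]
  · rw [if_neg (by tauto)]
    have hE' : E ∈ (mergePartn Z ha hb hne).parts :=
      Finset.mem_insert_of_mem (Finset.mem_erase.2 ⟨hEb, Finset.mem_erase.2 ⟨hEa, hE⟩⟩)
    rw [PcZ_apply _ x hE' hi]

lemma minner_P0Z_delta (hm : ∀ i, 0 < mass i) (Z : Partn N)
    (ha : Ca ∈ Z.parts) (hb : Cb ∈ Z.parts) (hne : Ca ≠ Cb) (x : Conf N n) :
    minner mass (P0Z mass Z x)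
      (PcZ mass Z x - PcZ mass (mergePartn Z ha hb hne) x) = 0 := by
  classical
  exact minner_P0Z_eq_zero hm Z x _
    (fun E => com mass E x - com mass (if E = Ca ∨ E = Cb then Ca ∪ Cb else E) x)
    (fun E hE i hi => delta_apply hm Z ha hb hne x hE hi)

lemma delta_sq_le (hm : ∀ i, 0 < mass i) (Z : Partn N)
    (ha : Ca ∈ Z.parts) (hb : Cb ∈ Z.parts) (hne : Ca ≠ Cb) (x : Conf N n) :
    minner mass (PcZ mass Z x - PcZ mass (mergePartn Z ha hb hne) x)
        (PcZ mass Z x - PcZ mass (mergePartn Z ha hb hne) x)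
      ≤ (∑ i, mass i) * ‖com mass Ca x - com mass Cb x‖ ^ 2 := by
  classical
  have hab : Disjoint Ca Cb := Z.disjoint ha hb hne
  have hCa := Z.nonempty_of_mem_parts ha
  have hCb := Z.nonempty_of_mem_parts hb
  rw [minner_self_eq, Finset.sum_mul]
  refine Finset.sum_le_sum fun i _ => ?_
  refine mul_le_mul_of_nonneg_left ?_ (hm i).le
  have hbound : ‖(PcZ mass Z x - PcZ mass (mergePartn Z ha hb hne) x) i‖
      ≤ ‖com mass Ca x - com mass Cb x‖ := by
    obtain ⟨E, hE, hi⟩ := Z.exists_mem (Finset.mem_univ i)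
    rw [delta_apply hm Z ha hb hne x hE hi]
    by_cases hEa : E = Ca
    · rw [if_pos (Or.inl hEa), hEa]
      exact norm_com_sub_com_union_le hm hab hCa hCb x
    by_cases hEb : E = Cb
    · rw [if_pos (Or.inr hEb), hEb, Finset.union_comm]
      calc ‖com mass Cb x - com mass (Cb ∪ Ca) x‖
          ≤ ‖com mass Cb x - com mass Ca x‖ :=
            norm_com_sub_com_union_le hm hab.symm hCb hCa x
        _ = _ := by rw [norm_sub_rev]
    · rw [if_neg (by tauto), sub_self, norm_zero]
      exact norm_nonneg _
  calc ‖(PcZ mass Z x - PcZ mass (mergePartn Z ha hb hne) x) i‖ ^ 2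
      ≤ ‖com mass Ca x - com mass Cb x‖ ^ 2 :=
        pow_le_pow_left₀ (norm_nonneg _) hbound 2
    _ = _ := rfl

end deltamain

section bounds
variable {N n : ℕ} {mass : Fin N → ℝ}

lemma pair_bound (hm : ∀ i, 0 < mass i) (Z : Partn N) {E F : Finset (Fin N)}
    (hE : E ∈ Z.parts) (hF : F ∈ Z.parts) {i j : Fin N} (hij : i ≠ j)
    (hi : i ∈ E) (hj : j ∈ F) (x : Conf N n) :
    mass i * ‖x i - com mass E x‖ ^ 2 + mass j * ‖x j - com mass F x‖ ^ 2
      ≤ minner mass (P0Z mass Z x) (P0Z mass Z x) := by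
  rw [minner_self_eq]
  calc mass i * ‖x i - com mass E x‖ ^ 2 + mass j * ‖x j - com mass F x‖ ^ 2
      = ∑ k ∈ ({i, j} : Finset (Fin N)), mass k * ‖P0Z mass Z x k‖ ^ 2 := by
        rw [Finset.sum_pair hij, P0Z_apply Z x hE hi, P0Z_apply Z x hF hj]
    _ ≤ _ := Finset.sum_le_sum_of_subset_of_nonneg (Finset.subset_univ _)
        (fun k _ _ => mul_nonneg (hm k).le (sq_nonneg _))

lemma sq_le_of_mnorm_le (hm : ∀ i, 0 < mass i) {a b : Conf N n} {c : ℝ}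
    (h : mnorm mass a ≤ c * mnorm mass b) :
    minner mass a a ≤ c ^ 2 * minner mass b b := by
  have ha := minner_self_nonneg hm a
  have hb := minner_self_nonneg hm b
  have h2 := pow_le_pow_left₀ (Real.sqrt_nonneg (minner mass a a)) h 2
  unfold mnorm at h2
  rwa [Real.sq_sqrt ha, mul_pow, Real.sq_sqrt hb] at h2

lemma lt_sq_of_mnorm_lt (hm : ∀ i, 0 < mass i) {a b : Conf N n} {c : ℝ} (hc : 0 ≤ c)
    (h : c * mnorm mass b < mnorm mass a) :
    c ^ 2 * minner mass b b < minner mass a a := by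
  have ha := minner_self_nonneg hm a
  have hb := minner_self_nonneg hm b
  have h2 := pow_lt_pow_left₀ h (mul_nonneg hc (Real.sqrt_nonneg _)) (two_ne_zero)
  unfold mnorm at h2
  rwa [Real.sq_sqrt ha, mul_pow, Real.sq_sqrt hb] at h2

end bounds

section azs
variable {N : ℕ} {mass : Fin N → ℝ} {κ κ' dd : ℕ → ℝ}

lemma totalMass_pos (hm : ∀ i, 0 < mass i) (hN : 0 < N) : 0 < totalMass mass := by
  have : Nonempty (Fin N) := ⟨⟨0, hN⟩⟩
  exact Finset.sum_pos (fun i _ => hm i) Finset.univ_nonempty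

lemma minMass_le (hm : ∀ i, 0 < mass i) (i : Fin N) : minMass mass ≤ mass i :=
  ciInf_le (Set.Finite.bddBelow (Set.finite_range mass)) i

lemma minMass_pos (hm : ∀ i, 0 < mass i) (hN : 0 < N) : 0 < minMass mass := by
  have hne : Nonempty (Fin N) := ⟨⟨0, hN⟩⟩
  obtain ⟨i0, hi0⟩ := Finite.exists_min mass
  exact lt_of_lt_of_le (hm i0) (le_ciInf hi0)

/-- `κ` is strictly decreasing from 1 on. -/
lemma kappa_succ_lt (hm : ∀ i, 0 < mass i) (hN : 0 < N) (h : AZS mass κ κ' dd)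
    {l : ℕ} (hl : 1 ≤ l) : κ (l + 1) < κ l := by
  obtain ⟨h1, h2, h3⟩ := h.2 l hl
  have hM := totalMass_pos hm hN
  have hmm := minMass_pos hm hN
  have hdd := (h.1 (l + 1)).2.2
  have hk1 := (h.1 (l + 1)).1
  have hk' := (h.1 l).2.1
  -- the AZS inequality forces `κ' l ^ 2 > κ (l+1) ^ 2`
  have hQ : 0 < (κ' l ^ 2 - κ (l + 1) ^ 2) / (1 + κ' l ^ 2) := by
    by_contra hc
    push_neg at hc
    have : minMass mass ^ 3 / totalMass mass ^ 3 *
        ((κ' l ^ 2 - κ (l + 1) ^ 2) / (1 + κ' l ^ 2)) ≤ 0 :=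
      mul_nonpos_of_nonneg_of_nonpos (by positivity) hc
    nlinarith [sq_nonneg (dd (l + 1)), sq_nonneg (κ (l + 1))]
  have hnum : 0 < κ' l ^ 2 - κ (l + 1) ^ 2 := by
    by_contra hc
    push_neg at hc
    have := div_nonpos_of_nonpos_of_nonneg hc (by positivity : (0:ℝ) ≤ 1 + κ' l ^ 2)
    linarith
  have : κ (l + 1) < κ' l := by nlinarith
  linarith

lemma kappa_anti (hm : ∀ i, 0 < mass i) (hN : 0 < N) (h : AZS mass κ κ' dd)
    {a b : ℕ} (ha : 1 ≤ a) (hab : a ≤ b) : κ b ≤ κ a := by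
  induction b, hab using Nat.le_induction with
  | base => exact le_refl _
  | succ b hab ih => exact le_trans (kappa_succ_lt hm hN h (le_trans ha hab)).le ih

end azs


/-- numeric contradiction, case `|Z| = 2`. -/
lemma case2_contra (m0 M0 k1 q0 d0 T Pc A : ℝ) (hm : 0 < m0) (hM : 0 < M0)
    (h3m : 3 * m0 ≤ M0) (hk : 0 < k1) (hT : 0 < T) (hA0 : 0 ≤ A) (hPc0 : 0 ≤ Pc)
    (hpy : T = A + Pc) (hAk : A ≤ k1 ^ 2 * Pc) (hii : m0 * Pc ≤ 8 * M0 * k1 ^ 2 * T)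
    (F1 : m0 ^ 3 / M0 ^ 3 * ((q0 ^ 2 - k1 ^ 2) / (1 + q0 ^ 2)) - k1 ^ 2 > d0 ^ 2)
    (F2 : d0 ^ 2 > k1 ^ 2 * (1 + k1 ^ 2)) : False := by
  have hM3pos : (0:ℝ) < M0 ^ 3 := by positivity
  have hQ1 : (q0 ^ 2 - k1 ^ 2) / (1 + q0 ^ 2) ≤ 1 := by
    rw [div_le_one (by positivity)]
    nlinarith [sq_nonneg k1]
  have hfrac : m0 ^ 3 / M0 ^ 3 * ((q0 ^ 2 - k1 ^ 2) / (1 + q0 ^ 2)) ≤ m0 ^ 3 / M0 ^ 3 :=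
    mul_le_of_le_one_right (by positivity) hQ1
  have hkey : k1 ^ 2 * (2 + k1 ^ 2) < m0 ^ 3 / M0 ^ 3 := by linarith [F1, F2, hfrac]
  have hkeyP : k1 ^ 2 * (2 + k1 ^ 2) * M0 ^ 3 < m0 ^ 3 := (lt_div_iff₀ hM3pos).1 hkey
  have hTle : T ≤ (1 + k1 ^ 2) * Pc := by linarith [hAk, hpy]
  have t1 : m0 * T ≤ (1 + k1 ^ 2) * (m0 * Pc) := by
    have := mul_le_mul_of_nonneg_left hTle hm.le
    linarith [this]
  have t2 : (1 + k1 ^ 2) * (m0 * Pc) ≤ (1 + k1 ^ 2) * (8 * M0 * k1 ^ 2 * T) :=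
    mul_le_mul_of_nonneg_left hii (by positivity)
  have t3 : m0 ≤ 8 * M0 * (k1 ^ 2 * (1 + k1 ^ 2)) := by
    have t4 : m0 * T ≤ (8 * M0 * (k1 ^ 2 * (1 + k1 ^ 2))) * T := by linarith [t1, t2]
    exact le_of_mul_le_mul_right t4 hT
  have u1 : k1 ^ 2 * (1 + k1 ^ 2) ≤ k1 ^ 2 * (2 + k1 ^ 2) := by
    have := sq_nonneg k1
    linarith [this]
  have t4 : m0 ≤ 8 * M0 * (k1 ^ 2 * (2 + k1 ^ 2)) := by
    have h8 := mul_le_mul_of_nonneg_left u1 (by positivity : (0:ℝ) ≤ 8 * M0)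
    linarith [t3, h8]
  have u2 : m0 * M0 ^ 3 ≤ 8 * M0 * (k1 ^ 2 * (2 + k1 ^ 2)) * M0 ^ 3 :=
    mul_le_mul_of_nonneg_right t4 (by positivity)
  have u3 : 8 * M0 * (k1 ^ 2 * (2 + k1 ^ 2) * M0 ^ 3) < 8 * M0 * m0 ^ 3 :=
    mul_lt_mul_of_pos_left hkeyP (by positivity)
  have u4 : m0 * M0 ^ 3 < 8 * M0 * m0 ^ 3 := by linarith [u2, u3]
  have v1 : 9 * m0 ^ 2 ≤ M0 ^ 2 := by
    have := mul_le_mul h3m h3m (by positivity : (0:ℝ) ≤ 3 * m0) hM.le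
    linarith [this]
  have v2 : 9 * m0 ^ 2 * M0 ≤ M0 ^ 3 := by
    have := mul_le_mul_of_nonneg_right v1 hM.le
    linarith [this]
  have v3 : m0 * (9 * m0 ^ 2 * M0) ≤ m0 * M0 ^ 3 := mul_le_mul_of_nonneg_left v2 hm.le
  linarith [u4, v3, mul_pos (mul_pos (mul_pos hm hm) hm) hM]

/-- numeric contradiction, case `|Z| ≥ 3`. -/
lemma case3_contra (m0 M0 k1 q1 d1 T A D2 A' Pc' : ℝ) (hm : 0 < m0) (hM : 0 < M0)
    (h3m : 3 * m0 ≤ M0) (hk : 0 < k1) (hA0 : 0 ≤ A) (hD20 : 0 ≤ D2) (hPc'0 : 0 ≤ Pc')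
    (hpy' : T = A' + Pc') (hA'val : A' = A + D2)
    (hAT : A ≤ k1 ^ 2 * T)
    (hii : m0 * D2 ≤ 8 * M0 * k1 ^ 2 * T)
    (hstr : q1 ^ 2 * Pc' < A')
    (F1 : m0 ^ 3 / M0 ^ 3 * ((q1 ^ 2 - k1 ^ 2) / (1 + q1 ^ 2)) - k1 ^ 2 > d1 ^ 2)
    (F2 : d1 ^ 2 > k1 ^ 2 * (1 + k1 ^ 2)) : False := by
  have hposM : (0:ℝ) < M0 ^ 3 * (1 + q1 ^ 2) := by positivity
  have hq2 : (0:ℝ) < 1 + q1 ^ 2 := by positivity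
  have G1 : (d1 ^ 2 + k1 ^ 2) * (M0 ^ 3 * (1 + q1 ^ 2)) < m0 ^ 3 * (q1 ^ 2 - k1 ^ 2) := by
    rw [← lt_div_iff₀ hposM, ← div_mul_div_comm]
    linarith [F1]
  have hT0 : 0 < T := by
    have h0 : 0 < A' := lt_of_le_of_lt (by positivity) hstr
    linarith [hPc'0]
  have w0 : 2 * k1 ^ 2 < d1 ^ 2 + k1 ^ 2 := by linarith [F2, sq_nonneg (k1 ^ 2)]
  have S1 : 2 * k1 ^ 2 * (M0 ^ 3 * (1 + q1 ^ 2)) < m0 ^ 3 * (q1 ^ 2 - k1 ^ 2) := by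
    have hw := mul_lt_mul_of_pos_right w0 hposM
    linarith [G1]
  have hPc'e : Pc' = T - A - D2 := by linarith [hpy', hA'val]
  rw [hPc'e] at hstr
  have h6 : A * (1 + q1 ^ 2) ≤ k1 ^ 2 * T * (1 + q1 ^ 2) :=
    mul_le_mul_of_nonneg_right hAT hq2.le
  have S2 : D2 * (1 + q1 ^ 2) > (q1 ^ 2 - k1 ^ 2 - k1 ^ 2 * q1 ^ 2) * T := by
    nlinarith [hstr, h6, hA'val, hq2]
  have hmk : (0:ℝ) ≤ m0 ^ 3 * k1 ^ 2 := by positivity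
  have S3 : m0 ^ 3 * (q1 ^ 2 - k1 ^ 2 - k1 ^ 2 * q1 ^ 2)
      > k1 ^ 2 * (1 + q1 ^ 2) * (2 * M0 ^ 3 - m0 ^ 3) := by nlinarith [S1, hmk, hq2]
  have t1 : m0 ^ 3 * (D2 * (1 + q1 ^ 2))
      > m0 ^ 3 * ((q1 ^ 2 - k1 ^ 2 - k1 ^ 2 * q1 ^ 2) * T) :=
    mul_lt_mul_of_pos_left S2 (by positivity)
  have t2 : (m0 ^ 3 * (q1 ^ 2 - k1 ^ 2 - k1 ^ 2 * q1 ^ 2)) * T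
      > (k1 ^ 2 * (1 + q1 ^ 2) * (2 * M0 ^ 3 - m0 ^ 3)) * T :=
    mul_lt_mul_of_pos_right S3 hT0
  have t3 : k1 ^ 2 * (2 * M0 ^ 3 - m0 ^ 3) * T * (1 + q1 ^ 2)
      < m0 ^ 3 * D2 * (1 + q1 ^ 2) := by linarith [t1, t2]
  have S4 : k1 ^ 2 * (2 * M0 ^ 3 - m0 ^ 3) * T < m0 ^ 3 * D2 :=
    lt_of_mul_lt_mul_right t3 hq2.le
  have S5 : m0 ^ 3 * D2 ≤ 8 * M0 * m0 ^ 2 * k1 ^ 2 * T := by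
    have := mul_le_mul_of_nonneg_left hii (sq_nonneg m0)
    linarith [this]
  have hKT : 0 < k1 ^ 2 * T := by positivity
  have hfin : (2 * M0 ^ 3 - m0 ^ 3) * (k1 ^ 2 * T) < 8 * M0 * m0 ^ 2 * (k1 ^ 2 * T) := by
    linarith [S4, S5]
  have hfin2 : 2 * M0 ^ 3 - m0 ^ 3 < 8 * M0 * m0 ^ 2 := lt_of_mul_lt_mul_right hfin hKT.le
  have v1 : 9 * m0 ^ 2 ≤ M0 ^ 2 := by
    have := mul_le_mul h3m h3m (by positivity : (0:ℝ) ≤ 3 * m0) hM.le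
    linarith [this]
  have v2 : 18 * m0 ^ 2 * M0 ≤ 2 * M0 ^ 3 := by
    have := mul_le_mul_of_nonneg_right v1 hM.le
    linarith [this]
  have v3 : m0 < 10 * M0 := by linarith [h3m, hm, hM]
  have v4 : m0 ^ 3 < 10 * M0 * m0 ^ 2 := by
    have := mul_lt_mul_of_pos_right v3 (by positivity : (0:ℝ) < m0 ^ 2)
    linarith [this]
  linarith [hfin2, v2, v4]

set_option maxHeartbeats 1000000 in
theorem stmt_15 (N n : ℕ) (hN : 2 ≤ N) (hn : 1 ≤ n)
    (mass : Fin N → ℝ) (hm : ∀ i, 0 < mass i)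
    (κ κ' dd : ℕ → ℝ) (hAZS : AZS mass κ κ' dd)
    (Z : Partn N) (hZ : 2 ≤ Z.parts.card)
    (C : Finset (Fin N)) (hC : C.Nonempty)
    (hsplit : ∀ C' ∈ Z.parts, ¬ C ⊆ C')
    (Ztil : Partn N) (hCZtil : C ∈ Ztil.parts)
    (hcard : Z.parts.card ≤ Ztil.parts.card) :
    cone mass Ztil (κ Ztil.parts.card) ∩ Mreg (n := n) mass κ' κ Z = ∅ := by
  ext x
  simp only [Set.mem_inter_iff, Set.mem_empty_iff_false, iff_false]
  rintro ⟨hxT, hxM⟩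
  rw [Mreg, Set.mem_diff] at hxM
  obtain ⟨hxZ, hxU⟩ := hxM
  have hnotin : ∀ Z' : Partn N, Z'.parts.card < Z.parts.card →
      x ∉ cone mass Z' (κ' Z'.parts.card) := by
    intro Z' h hmem
    exact hxU (Set.mem_iUnion.2 ⟨Z', Set.mem_iUnion.2 ⟨h, hmem⟩⟩)
  have hN0 : 0 < N := by omega
  have hMpos := totalMass_pos hm hN0
  have hmpos := minMass_pos hm hN0
  have h1p : 1 < Z.parts.card := hZ
  have h1t : 1 < Ztil.parts.card := lt_of_lt_of_le h1p hcard
  rw [cone, if_pos h1t, Set.mem_sep_iff] at hxT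
  rw [cone, if_pos h1p, Set.mem_sep_iff] at hxZ
  obtain ⟨hx0, hineqZ⟩ := hxZ
  obtain ⟨-, hineqT⟩ := hxT
  -- abbreviations for the main quantities
  set T := minner mass x x with hT
  set A := minner mass (P0Z mass Z x) (P0Z mass Z x) with hA
  set Pc := minner mass (PcZ mass Z x) (PcZ mass Z x) with hPc
  set At := minner mass (P0Z mass Ztil x) (P0Z mass Ztil x) with hAt
  set Pt' := minner mass (PcZ mass Ztil x) (PcZ mass Ztil x) with hPt
  have hA0 : 0 ≤ A := minner_self_nonneg hm _
  have hPc0 : 0 ≤ Pc := minner_self_nonneg hm _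
  have hAt0 : 0 ≤ At := minner_self_nonneg hm _
  have hPt0 : 0 ≤ Pt' := minner_self_nonneg hm _
  have hpyZ : T = A + Pc := pyth hm Z x
  have hpyT : T = At + Pt' := pyth hm Ztil x
  -- squared cone inequalities
  have hAk : A ≤ (κ Z.parts.card) ^ 2 * Pc := sq_le_of_mnorm_le hm hineqZ
  have hAtk : At ≤ (κ Ztil.parts.card) ^ 2 * Pt' := sq_le_of_mnorm_le hm hineqT
  -- positivity of the κ's
  have hkp : 0 < κ Z.parts.card := (hAZS.1 _).1
  have hkt : 0 < κ Ztil.parts.card := (hAZS.1 _).1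
  have hkmono : κ Ztil.parts.card ≤ κ Z.parts.card :=
    kappa_anti hm hN0 hAZS (by omega) hcard
  -- choose the particles i,j in C lying in different clusters of Z
  obtain ⟨i, hiC⟩ := hC
  obtain ⟨Ca, haZ, hiCa⟩ := Z.exists_mem (Finset.mem_univ i)
  obtain ⟨j, hjC, hjCa⟩ := Finset.not_subset.1 (hsplit Ca haZ)
  obtain ⟨Cb, hbZ, hjCb⟩ := Z.exists_mem (Finset.mem_univ j)
  have hne : Ca ≠ Cb := fun h => hjCa (h ▸ hjCb)
  have hij : i ≠ j := fun h => hjCa (h ▸ hiCa)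
  -- a third particle, outside C
  obtain ⟨E, hE, hEC⟩ := Finset.exists_mem_ne h1t C
  obtain ⟨k, hk⟩ := Ztil.nonempty_of_mem_parts hE
  have hkC : k ∉ C := fun h => Finset.disjoint_left.1 (Ztil.disjoint hE hCZtil hEC) hk h
  have hik : i ≠ k := fun h => hkC (h ▸ hiC)
  have hjk : j ≠ k := fun h => hkC (h ▸ hjC)
  -- total mass at least 3 minimal masses
  have h3m : 3 * minMass mass ≤ totalMass mass := by
    have hcard3 : ({i, j, k} : Finset (Fin N)).card = 3 := by
      rw [Finset.card_insert_of_notMem (by simp [hij, hik]),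
        Finset.card_insert_of_notMem (by simp [hjk]), Finset.card_singleton]
    calc 3 * minMass mass = ∑ _l ∈ ({i, j, k} : Finset (Fin N)), minMass mass := by
          rw [Finset.sum_const, hcard3]; push_cast; ring
      _ ≤ ∑ l ∈ ({i, j, k} : Finset (Fin N)), mass l :=
          Finset.sum_le_sum fun l _ => minMass_le hm l
      _ ≤ totalMass mass := Finset.sum_le_sum_of_subset_of_nonneg
          (Finset.subset_univ _) fun l _ _ => (hm l).le
  -- the center-of-mass distance bound
  have hpZ := pair_bound hm Z haZ hbZ hij hiCa hjCb x
  have hpT := pair_bound hm Ztil hCZtil hCZtil hij hiC hjC x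
  have hmi := minMass_le hm i
  have hmj := minMass_le hm j
  have hD : minMass mass * ‖com mass Ca x - com mass Cb x‖ ^ 2 ≤ 4 * (A + At) := by
    set u1 := ‖x i - com mass Ca x‖
    set u2 := ‖x i - com mass C x‖
    set u3 := ‖x j - com mass C x‖
    set u4 := ‖x j - com mass Cb x‖
    have htri : ‖com mass Ca x - com mass Cb x‖ ≤ u1 + u2 + u3 + u4 := by
      have e : com mass Ca x - com mass Cb x
          = -(x i - com mass Ca x) + (x i - com mass C x)
            + -(x j - com mass C x) + (x j - com mass Cb x) := by abel
      rw [e]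
      refine le_trans (norm_add_le _ _) (add_le_add ?_ le_rfl)
      refine le_trans (norm_add_le _ _) (add_le_add ?_ (by rw [norm_neg]))
      refine le_trans (norm_add_le _ _) (add_le_add (by rw [norm_neg]) le_rfl)
    have hD2 : ‖com mass Ca x - com mass Cb x‖ ^ 2 ≤ (u1 + u2 + u3 + u4) ^ 2 :=
      pow_le_pow_left₀ (norm_nonneg _) htri 2
    have hsum : (u1 + u2 + u3 + u4) ^ 2 ≤ 4 * (u1 ^ 2 + u2 ^ 2 + u3 ^ 2 + u4 ^ 2) := by
      nlinarith [sq_nonneg (u1 - u2), sq_nonneg (u1 - u3), sq_nonneg (u1 - u4),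
        sq_nonneg (u2 - u3), sq_nonneg (u2 - u4), sq_nonneg (u3 - u4)]
    have h1 : minMass mass * ‖com mass Ca x - com mass Cb x‖ ^ 2
        ≤ minMass mass * (4 * (u1 ^ 2 + u2 ^ 2 + u3 ^ 2 + u4 ^ 2)) :=
      mul_le_mul_of_nonneg_left (hD2.trans hsum) hmpos.le
    have h2 : minMass mass * u1 ^ 2 ≤ mass i * u1 ^ 2 :=
      mul_le_mul_of_nonneg_right hmi (sq_nonneg _)
    have h3 : minMass mass * u2 ^ 2 ≤ mass i * u2 ^ 2 :=
      mul_le_mul_of_nonneg_right hmi (sq_nonneg _)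
    have h4 : minMass mass * u3 ^ 2 ≤ mass j * u3 ^ 2 :=
      mul_le_mul_of_nonneg_right hmj (sq_nonneg _)
    have h5 : minMass mass * u4 ^ 2 ≤ mass j * u4 ^ 2 :=
      mul_le_mul_of_nonneg_right hmj (sq_nonneg _)
    linarith [h1, h2, h3, h4, h5, hpZ, hpT]
  -- the merged partition
  have hnemerge : Ca ≠ Cb := hne
  set Z' := mergePartn Z haZ hbZ hne with hZ'
  have hcard' : Z'.parts.card = Z.parts.card - 1 := mergePartn_card Z haZ hbZ hne
  have hnot' := hnotin Z' (by omega)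
  set Δ := PcZ mass Z x - PcZ mass Z' x with hΔ
  set D2 := minner mass Δ Δ with hD2
  have hD20 : 0 ≤ D2 := minner_self_nonneg hm _
  have hΔle : D2 ≤ totalMass mass * ‖com mass Ca x - com mass Cb x‖ ^ 2 :=
    delta_sq_le hm Z haZ hbZ hne x
  -- key upper bound (ii) : m * Δ² ≤ 8 M κ(p)² T
  have hPcT : Pc ≤ T := by linarith
  have hPtT : Pt' ≤ T := by linarith
  have hAT : A ≤ (κ Z.parts.card) ^ 2 * T :=
    hAk.trans (mul_le_mul_of_nonneg_left hPcT (by positivity))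
  have hAtT : At ≤ (κ Z.parts.card) ^ 2 * T := by
    refine hAtk.trans ?_
    have h1 : (κ Ztil.parts.card) ^ 2 ≤ (κ Z.parts.card) ^ 2 :=
      pow_le_pow_left₀ hkt.le hkmono 2
    have hT0 : 0 ≤ T := by
      rw [hpyZ]; linarith
    exact mul_le_mul h1 hPtT hPt0 (by positivity)
  have hii : minMass mass * D2 ≤ 8 * totalMass mass * (κ Z.parts.card) ^ 2 * T := by
    have s1 : minMass mass * D2
        ≤ minMass mass * (totalMass mass * ‖com mass Ca x - com mass Cb x‖ ^ 2) :=
      mul_le_mul_of_nonneg_left hΔle hmpos.le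
    have s2 : totalMass mass * (minMass mass * ‖com mass Ca x - com mass Cb x‖ ^ 2)
        ≤ totalMass mass * (4 * (A + At)) :=
      mul_le_mul_of_nonneg_left hD hMpos.le
    have s3 : totalMass mass * (A + At)
        ≤ totalMass mass * ((κ Z.parts.card) ^ 2 * T + (κ Z.parts.card) ^ 2 * T) :=
      mul_le_mul_of_nonneg_left (add_le_add hAT hAtT) hMpos.le
    linarith [s1, s2, s3]
  -- the Pythagoras decomposition for Z'
  set A' := minner mass (P0Z mass Z' x) (P0Z mass Z' x) with hA'
  set Pc' := minner mass (PcZ mass Z' x) (PcZ mass Z' x) with hPc'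
  have hpy' : T = A' + Pc' := pyth hm Z' x
  have hPc'0 : 0 ≤ Pc' := minner_self_nonneg hm _
  have hsplitP : P0Z mass Z' x = P0Z mass Z x + Δ := by
    rw [hΔ, P0Z, P0Z]; abel
  have hA'val : A' = A + D2 := by
    rw [hA', hsplitP, minner_add_add, minner_P0Z_delta hm Z haZ hbZ hne x, hD2, hA]
    ring
  rcases eq_or_lt_of_le hZ with hp2 | hp3
  · -- case |Z| = 2 : the merged partition is trivial
    have hc1 : Z'.parts.card = 1 := by omega
    rw [cone, if_neg (by omega), Set.mem_sep_iff] at hnot'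
    push_neg at hnot'
    have hxlt : κ' Z'.parts.card < mnorm mass x := hnot' hx0
    have hq'pos : 0 < κ' Z'.parts.card := (hAZS.1 _).2.1
    have hT0 : 0 < T := by
      have h0 : 0 < mnorm mass x := lt_trans hq'pos hxlt
      unfold mnorm at h0
      exact Real.sqrt_pos.1 h0
    have hPcZ' : PcZ mass Z' x = 0 := by
      funext i0
      obtain ⟨E0, hE0, hiE0⟩ := Z'.exists_mem (Finset.mem_univ i0)
      obtain ⟨a, hpa⟩ := Finset.card_eq_one.1 hc1
      have hEa : E0 = a := by rw [hpa] at hE0; exact Finset.mem_singleton.1 hE0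
      have hauniv : a = Finset.univ := by
        have hsup := Z'.sup_parts
        rw [hpa, Finset.sup_singleton] at hsup
        exact hsup
      rw [PcZ_apply Z' x hE0 hiE0, hEa, hauniv, Pi.zero_apply, com,
        show ∑ i ∈ Finset.univ, mass i • x i = 0 from hx0, smul_zero]
    have hD2Pc : D2 = Pc := by rw [hD2, hΔ, hPcZ', sub_zero]
    obtain ⟨-, F1, F2⟩ := hAZS.2 1 le_rfl
    have hpe : (1 : ℕ) + 1 = Z.parts.card := by omega
    rw [hpe] at F1 F2
    have hiiPc : minMass mass * Pc ≤ 8 * totalMass mass * (κ Z.parts.card) ^ 2 * T := by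
      rw [← hD2Pc]; exact hii
    exact case2_contra (minMass mass) (totalMass mass) (κ Z.parts.card) (κ' 1)
      (dd Z.parts.card) T Pc A hmpos hMpos h3m hkp hT0 hA0 hPc0 hpyZ hAk hiiPc F1 F2
  · -- case |Z| ≥ 3 : the merged partition is still nontrivial
    have h1' : 1 < Z'.parts.card := by omega
    rw [cone, if_pos h1', Set.mem_sep_iff] at hnot'
    push_neg at hnot'
    have hstrict0 : κ' Z'.parts.card * mnorm mass (PcZ mass Z' x)
        < mnorm mass (P0Z mass Z' x) := hnot' hx0
    have hqpos : 0 < κ' Z'.parts.card := (hAZS.1 _).2.1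
    have hstr : (κ' Z'.parts.card) ^ 2 * Pc' < A' := lt_sq_of_mnorm_lt hm hqpos.le hstrict0
    obtain ⟨-, F1, F2⟩ := hAZS.2 (Z.parts.card - 1) (by omega)
    have hpe : Z.parts.card - 1 + 1 = Z.parts.card := by omega
    rw [hpe] at F1 F2
    rw [hcard'] at hstr
    exact case3_contra (minMass mass) (totalMass mass) (κ Z.parts.card)
      (κ' (Z.parts.card - 1)) (dd Z.parts.card) T A D2 A' Pc' hmpos hMpos h3m hkp hA0
      hD20 hPc'0 hpy' hA'val hAT hii hstr F1 F2
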